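/- Let γ > 0, C₂ > 0, z₀ > 0, and let A be a real number with 0 < A < C₂ z₀^{2γ+1}; set B = 2γC₂ z₀^{2γ} − 2γA/z₀ (so that B > 0). Let z : ℝ → ℝ be nonnegative and differentiable on [0,∞) with z(0) = z₀, satisfying z'(t) + C₂ z(t)^{2γ+1} ≤ A (1 + Bt)^{−(2γ+1)/(2γ)} for all t ≥ 0. Then z(t) ≤ z₀ (1 + Bt)^{−1/(2γ)} for all t ≥ 0. -/

import Mathlib

/-- Let `γ > 0`, `C₂ > 0`, `z₀ > 0`, `0 < A < C₂ z₀^{2γ+1}`, and set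
`B = 2γC₂ z₀^{2γ} − 2γA/z₀` (so `B > 0`).  Let `z : ℝ → ℝ` be nonnegative and differentiable
on `[0,∞)` with `z 0 = z₀`, satisfying `z' + C₂ z^{2γ+1} ≤ A (1 + Bt)^{−(2γ+1)/(2γ)}` for all
`t ≥ 0`.  Then `z t ≤ z₀ (1 + Bt)^{−1/(2γ)}` for all `t ≥ 0`. -/
theorem stmt7 (γ C₂ z₀ A : ℝ) (hγ : 0 < γ) (hC₂ : 0 < C₂) (hz₀ : 0 < z₀)
    (hA : 0 < A) (hA' : A < C₂ * z₀ ^ (2 * γ + 1))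
    (B : ℝ) (hB : B = 2 * γ * C₂ * z₀ ^ (2 * γ) - 2 * γ * A / z₀)
    (z : ℝ → ℝ) (hz0 : z 0 = z₀)
    (hnn : ∀ t, 0 ≤ t → 0 ≤ z t)
    (hdiff : ∀ t, 0 ≤ t → DifferentiableAt ℝ z t)
    (hineq : ∀ t, 0 ≤ t →
      deriv z t + C₂ * z t ^ (2 * γ + 1) ≤ A * (1 + B * t) ^ (-((2 * γ + 1) / (2 * γ)))) :
    ∀ t, 0 ≤ t → z t ≤ z₀ * (1 + B * t) ^ (-(1 / (2 * γ))) := by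
  have h2γ : (2 : ℝ) * γ ≠ 0 := by positivity
  have hz₀ne : z₀ ≠ 0 := hz₀.ne'
  have hrpow_add : z₀ ^ (2 * γ + 1) = z₀ ^ (2 * γ) * z₀ := Real.rpow_add_one hz₀ne _
  -- key coefficient identity : z₀ * B / (2γ) = C₂ z₀^{2γ+1} - A
  have hcoeff : z₀ * B / (2 * γ) = C₂ * z₀ ^ (2 * γ + 1) - A := by
    rw [hB, hrpow_add]; field_simp
  have hBpos : 0 < B := by
    have h1 : 0 < C₂ * z₀ ^ (2 * γ + 1) - A := sub_pos.mpr hA'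
    have h2 : 0 < z₀ * B / (2 * γ) := hcoeff ▸ h1
    have h2γpos : (0 : ℝ) < 2 * γ := by positivity
    have h3 : 0 < z₀ * B := by
      have := mul_pos h2 h2γpos
      rwa [div_mul_cancel₀ _ h2γ] at this
    nlinarith
  -- exponent identities
  have hexp1 : -(1 / (2 * γ)) - 1 = -((2 * γ + 1) / (2 * γ)) := by
    field_simp; ring
  have hexp2 : -(1 / (2 * γ)) * (2 * γ + 1) = -((2 * γ + 1) / (2 * γ)) := by
    field_simp
  set β : ℝ := (2 * γ + 1) / (2 * γ) with hβ
  -- the comparison function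
  set w : ℝ → ℝ := fun s => z₀ * (1 + B * s) ^ (-(1 / (2 * γ))) with hw
  have hbase : ∀ s : ℝ, 0 ≤ s → (0 : ℝ) < 1 + B * s := fun s hs => by nlinarith
  have hwpos : ∀ s : ℝ, 0 ≤ s → 0 < w s := fun s hs =>
    mul_pos hz₀ (Real.rpow_pos_of_pos (hbase s hs) _)
  -- derivative of w
  have hwderiv : ∀ s : ℝ, 0 ≤ s →
      HasDerivAt w (-(z₀ * B / (2 * γ)) * (1 + B * s) ^ (-β)) s := by
    intro s hs
    have h1 : HasDerivAt (fun u : ℝ => 1 + B * u) B s := by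
      simpa using ((hasDerivAt_id s).const_mul B).const_add 1
    have h2 := (h1.rpow_const (p := -(1 / (2 * γ))) (Or.inl (hbase s hs).ne')).const_mul z₀
    have heq : z₀ * (B * (-(1 / (2 * γ))) * (1 + B * s) ^ (-(1 / (2 * γ)) - 1)) =
        -(z₀ * B / (2 * γ)) * (1 + B * s) ^ (-β) := by
      rw [hexp1]; ring
    exact heq ▸ h2
  -- value of C₂ * (w s)^(2γ+1)
  have hwpow : ∀ s : ℝ, 0 ≤ s →
      C₂ * w s ^ (2 * γ + 1) = C₂ * z₀ ^ (2 * γ + 1) * (1 + B * s) ^ (-β) := by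
    intro s hs
    have hb := (hbase s hs).le
    rw [hw]
    simp only
    rw [Real.mul_rpow hz₀.le (Real.rpow_nonneg hb _), ← Real.rpow_mul hb, hexp2]
    ring
  -- main estimate up to ε
  intro t ht
  have key : ∀ ε : ℝ, 0 < ε → z t ≤ w t + ε * (1 + t) := by
    intro ε hε
    have main := image_le_of_deriv_right_lt_deriv_boundary'
      (f := z) (f' := deriv z) (a := 0) (b := t)
      (B := fun s => w s + ε * (1 + s))
      (B' := fun s => -(z₀ * B / (2 * γ)) * (1 + B * s) ^ (-β) + ε)
      (fun x hx => ((hdiff x hx.1).continuousAt).continuousWithinAt)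
      (fun x hx => ((hdiff x hx.1).hasDerivAt).hasDerivWithinAt)
      (by simp [hz0, hw, hε.le])
      (fun x hx => by
        have h1 := (hwderiv x hx.1).add
          (((hasDerivAt_id x).const_add (1 : ℝ)).const_mul ε)
        exact (by simpa using h1 : HasDerivAt (w + fun y => ε * (1 + y)) _ x).continuousAt.continuousWithinAt)
      (fun x hx => by
        have h1 := (hwderiv x hx.1).add
          (((hasDerivAt_id x).const_add (1 : ℝ)).const_mul ε)
        exact (by simpa using h1 : HasDerivAt (w + fun y => ε * (1 + y)) _ x).hasDerivWithinAt)
      (fun x hx hcontact => by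
        have hx0 : 0 ≤ x := hx.1
        have hc : z x = w x + ε * (1 + x) := hcontact
        have hzx : w x < z x := by
          rw [hc]; nlinarith [mul_pos hε (by linarith : (0 : ℝ) < 1 + x)]
        have hpow : C₂ * w x ^ (2 * γ + 1) < C₂ * z x ^ (2 * γ + 1) := by
          have := Real.rpow_lt_rpow (hwpos x hx0).le hzx (by positivity :
            (0 : ℝ) < 2 * γ + 1)
          nlinarith
        have h1 : deriv z x < A * (1 + B * x) ^ (-β) - C₂ * w x ^ (2 * γ + 1) := by
          have := hineq x hx0
          simp only [hβ] at this ⊢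
          linarith
        have h2 : A * (1 + B * x) ^ (-β) - C₂ * w x ^ (2 * γ + 1) =
            -(z₀ * B / (2 * γ)) * (1 + B * x) ^ (-β) := by
          rw [hwpow x hx0, hcoeff]; ring
        calc deriv z x < A * (1 + B * x) ^ (-β) - C₂ * w x ^ (2 * γ + 1) := h1
          _ = -(z₀ * B / (2 * γ)) * (1 + B * x) ^ (-β) := h2
          _ < -(z₀ * B / (2 * γ)) * (1 + B * x) ^ (-β) + ε := by linarith)
    exact main (by simp [ht] : t ∈ Set.Icc 0 t)
  -- pass to the limit ε → 0
  by_contra hcon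
  push_neg at hcon
  have h1t : (0 : ℝ) < 1 + t := by linarith
  have hd : 0 < z t - w t := by
    have : w t = z₀ * (1 + B * t) ^ (-(1 / (2 * γ))) := rfl
    linarith
  have hεpos : 0 < (z t - w t) / (2 * (1 + t)) := div_pos hd (by positivity)
  have hk := key _ hεpos
  have heq : (z t - w t) / (2 * (1 + t)) * (1 + t) = (z t - w t) / 2 := by
    field_simp
  linarith
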